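/- (Core of Theorem 10, DNF lower bound) Let 2 ≤ k ≤ n and suppose the k-clique function f_{n,k} is written in disjunctive normal form: there is a family of terms T_{P_j,N_j}, indexed by j ∈ J, with each P_j, N_j disjoint, such that for every edge assignment x, f_{n,k}(x) = true iff x satisfies T_{P_j,N_j} for some j ∈ J. Then there is an injective map from the k-element subsets of Fin n into J; in particular, if J is finite then the disjunctive normal form has at least C(n,k) = n!/(k!(n−k)!) clauses. -/

import Mathlib

/-- An edge on the vertex set `Fin n`: an unordered pair of distinct vertices. -/
abbrev Edge (n : ℕ) := {e : Sym2 (Fin n) // ¬ e.IsDiag}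

/-- The `k`-clique Boolean function on edge assignments: `true` iff there is a
`k`-element vertex set all of whose internal edges are present. -/
def cliqueFun (n k : ℕ) (x : Edge n → Bool) : Bool :=
  decide (∃ S : Finset (Fin n), S.card = k ∧
    ∀ e : Edge n, (e : Sym2 (Fin n)) ∈ S.sym2 → x e = true)

/-- The set of edges with both endpoints in `S`. -/
def edgesIn (n : ℕ) (S : Finset (Fin n)) : Finset (Edge n) :=
  Finset.univ.filter (fun e => (e : Sym2 (Fin n)) ∈ S.sym2)

/-- Restriction of `cliqueFun` to the edge variables in `X`, obtained by setting
all edge variables outside `X` to `false`. -/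
def cliqueRestrict (n k : ℕ) (X : Finset (Edge n)) (x : {e : Edge n // e ∈ X} → Bool) : Bool :=
  cliqueFun n k (fun e => if h : e ∈ X then x ⟨e, h⟩ else false)

/-- The permutation of edges induced by a relabeling of the vertices,
sending the edge `{i, j}` to `{σ i, σ j}`. -/
def edgePerm {n : ℕ} (σ : Equiv.Perm (Fin n)) : Equiv.Perm (Edge n) where
  toFun e := ⟨Sym2.map σ e.1, fun h => e.2 ((Sym2.isDiag_map σ.injective).mp h)⟩
  invFun e := ⟨Sym2.map σ.symm e.1, fun h => e.2 ((Sym2.isDiag_map σ.symm.injective).mp h)⟩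
  left_inv e := Subtype.ext (by simp [Sym2.map_map])
  right_inv e := Subtype.ext (by simp [Sym2.map_map])

/-- core of Theorem 10: any disjunctive normal form of the
`k`-clique function (`2 ≤ k ≤ n`) admits an injective map from the `k`-element
subsets of `Fin n` into its index set; in particular a finite DNF has at least
`C(n,k)` clauses. -/
theorem dnf_clique_lower_bound (n k : ℕ) (hk : 2 ≤ k) (hkn : k ≤ n)
    {J : Type*} (P N : J → Finset (Edge n)) (hPN : ∀ j, Disjoint (P j) (N j))
    (hdnf : ∀ x : Edge n → Bool,
      cliqueFun n k x = true ↔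
        ∃ j : J, (∀ e ∈ P j, x e = true) ∧ (∀ e ∈ N j, x e = false)) :
    (∃ F : {S : Finset (Fin n) // S.card = k} → J, Function.Injective F) ∧
    (Finite J → Nat.choose n k ≤ Nat.card J) := by
  classical
  -- indicator assignment for a vertex set
  set ind : Finset (Fin n) → Edge n → Bool :=
    fun S e => decide ((e : Sym2 (Fin n)) ∈ S.sym2) with hind
  have hclique : ∀ S : Finset (Fin n), S.card = k → cliqueFun n k (ind S) = true := by
    intro S hS
    apply decide_eq_true
    exact ⟨S, hS, fun e he => by simp only [hind, decide_eq_true_eq]; exact he⟩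
  have hspec : ∀ S : {S : Finset (Fin n) // S.card = k},
      ∃ j : J, (∀ e ∈ P j, ind S.1 e = true) ∧ (∀ e ∈ N j, ind S.1 e = false) :=
    fun S => (hdnf (ind S.1)).mp (hclique S.1 S.2)
  choose F hFpos hFneg using hspec
  have hFinj : Function.Injective F := by
    intro S S' hF
    -- the common-intersection assignment satisfies term `F S`
    set T := S.1 ∩ S'.1 with hT
    have hsat : cliqueFun n k (ind T) = true := by
      rw [hdnf]
      refine ⟨F S, ?_, ?_⟩
      · intro e he
        have h1 : (e : Sym2 (Fin n)) ∈ S.1.sym2 := of_decide_eq_true (hFpos S e he)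
        have h2 : (e : Sym2 (Fin n)) ∈ S'.1.sym2 := of_decide_eq_true (hFpos S' e (hF ▸ he))
        simp only [hind, decide_eq_true_eq]
        rw [Finset.mem_sym2_iff] at h1 h2 ⊢
        exact fun y hy => Finset.mem_inter.mpr ⟨h1 y hy, h2 y hy⟩
      · intro e he
        have h1 : ind S.1 e = false := hFneg S e he
        simp only [hind, decide_eq_false_iff_not] at h1 ⊢
        intro hmem
        exact h1 (Finset.sym2_mono Finset.inter_subset_left hmem)
    obtain ⟨C, hCcard, hC⟩ := of_decide_eq_true hsat
    have hCsub : C ⊆ T := by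
      intro a ha
      obtain ⟨b, hb, hba⟩ := Finset.exists_mem_ne
        (by omega : 1 < C.card) a
      have hdiag : ¬ (Sym2.mk a b).IsDiag := by
        simp [Sym2.mk_isDiag_iff, hba.symm]
      have hmem : (Sym2.mk a b) ∈ C.sym2 := by
        rw [Finset.mem_sym2_iff]; intro y hy
        rcases Sym2.mem_iff.mp hy with rfl | rfl
        · exact ha
        · exact hb
      have := hC ⟨Sym2.mk a b, hdiag⟩ hmem
      simp only [hind, decide_eq_true_eq, Finset.mem_sym2_iff] at this
      exact this a (Sym2.mem_mk_left a b)
    have hCS : C = S.1 := Finset.eq_of_subset_of_card_le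
      (hCsub.trans Finset.inter_subset_left) (by rw [hCcard, S.2])
    have hCS' : C = S'.1 := Finset.eq_of_subset_of_card_le
      (hCsub.trans Finset.inter_subset_right) (by rw [hCcard, S'.2])
    exact Subtype.ext (hCS ▸ hCS')
  refine ⟨⟨F, hFinj⟩, fun hJ => ?_⟩
  have := Nat.card_le_card_of_injective F hFinj
  rwa [Nat.card_eq_fintype_card, Fintype.card_finset_len, Fintype.card_fin] at this
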